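/- Every bounded set of the form {x ∈ ℝ^k : A x ≤ b} (an H-polytope) equals the convex hull of its extreme points, i.e., it has a representation as a V-polytope generated by its vertices. -/

import Mathlib

/-- If `x` is an extreme point of `P = {x | A x ≤ b}` and `d` vanishes on all constraints tight
at `x`, then `d = 0`. -/
lemma tight_ker_eq_zero (m k : ℕ) (A : Matrix (Fin m) (Fin k) ℝ) (b : Fin m → ℝ)
    (P : Set (Fin k → ℝ)) (hP : P = {x : Fin k → ℝ | ∀ i, A.mulVec x i ≤ b i})
    (x : Fin k → ℝ) (hx : x ∈ P.extremePoints ℝ)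
    (d : Fin k → ℝ) (hd : ∀ i, A.mulVec x i = b i → A.mulVec d i = 0) : d = 0 := by
  by_contra hd0
  obtain ⟨hxP, hext⟩ := hx
  -- choose ε > 0 small enough
  set f : Fin m → ℝ := fun i =>
    if A.mulVec x i = b i then 1 else (b i - A.mulVec x i) / (|A.mulVec d i| + 1) with hf
  have hfpos : ∀ i, 0 < f i := by
    intro i
    by_cases h : A.mulVec x i = b i
    · simp [hf, h]
    · have hxi : A.mulVec x i ≤ b i := by rw [hP] at hxP; exact hxP i
      have hlt : A.mulVec x i < b i := lt_of_le_of_ne hxi h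
      have : f i = (b i - A.mulVec x i) / (|A.mulVec d i| + 1) := by simp [hf, h]
      rw [this]
      exact div_pos (by linarith) (by positivity)
  set s : Finset ℝ := insert (1 : ℝ) (Finset.image f Finset.univ) with hs
  have hsne : s.Nonempty := ⟨1, Finset.mem_insert_self _ _⟩
  set ε : ℝ := s.min' hsne with he
  have hεpos : 0 < ε := by
    have := s.min'_mem hsne
    rw [← he] at this
    rw [hs] at this
    rcases Finset.mem_insert.1 this with h | h
    · rw [he] at *; rw [h]; norm_num
    · obtain ⟨i, _, hi⟩ := Finset.mem_image.1 h
      rw [← hi]; exact hfpos i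
  have hεle : ∀ i, ε ≤ f i := fun i =>
    Finset.min'_le _ _ (Finset.mem_insert_of_mem (Finset.mem_image_of_mem f (Finset.mem_univ i)))
  -- key bound : ε * |A d i| ≤ b i - A x i for all i
  have hkey : ∀ i, ε * |A.mulVec d i| ≤ b i - A.mulVec x i := by
    intro i
    by_cases h : A.mulVec x i = b i
    · have := hd i h
      rw [this, abs_zero, mul_zero, h]
      simp
    · have hxi : A.mulVec x i < b i := lt_of_le_of_ne (by rw [hP] at hxP; exact hxP i) h
      have hεi : ε ≤ (b i - A.mulVec x i) / (|A.mulVec d i| + 1) := by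
        have := hεle i; rw [hf] at this; simpa [h] using this
      calc ε * |A.mulVec d i| ≤ (b i - A.mulVec x i) / (|A.mulVec d i| + 1) * |A.mulVec d i| := by
            apply mul_le_mul_of_nonneg_right hεi (abs_nonneg _)
        _ ≤ (b i - A.mulVec x i) / (|A.mulVec d i| + 1) * (|A.mulVec d i| + 1) := by
            apply mul_le_mul_of_nonneg_left (by linarith) (div_nonneg (by linarith) (by positivity))
        _ = b i - A.mulVec x i := by field_simp
  have hmem : ∀ (c : ℝ), |c| ≤ ε → x + c • d ∈ P := by
    intro c hc
    rw [hP]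
    intro i
    have h1 : A.mulVec (x + c • d) i = A.mulVec x i + c * A.mulVec d i := by
      rw [Matrix.mulVec_add, Matrix.mulVec_smul]
      simp [smul_eq_mul]
    rw [h1]
    have h2 : c * A.mulVec d i ≤ |c * A.mulVec d i| := le_abs_self _
    have h3 : |c * A.mulVec d i| = |c| * |A.mulVec d i| := abs_mul _ _
    have h4 : |c| * |A.mulVec d i| ≤ ε * |A.mulVec d i| :=
      mul_le_mul_of_nonneg_right hc (abs_nonneg _)
    have := hkey i
    linarith
  have hp1 : x + ε • d ∈ P := hmem ε (by rw [abs_of_pos hεpos])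
  have hp2 : x + (-ε) • d ∈ P := hmem (-ε) (by rw [abs_neg, abs_of_pos hεpos])
  have hseg : x ∈ openSegment ℝ (x + ε • d) (x + (-ε) • d) := by
    refine ⟨1/2, 1/2, by norm_num, by norm_num, by norm_num, ?_⟩
    module
  have := hext hp1 hp2 hseg
  have hεd : ε • d = 0 := by
    have : x + ε • d = x + 0 := by rw [this]; simp
    exact add_left_cancel this
  exact hd0 (by simpa [hεpos.ne'] using hεd)

/-- Every bounded H-polytope `{x : A x ≤ b}` in `ℝ^k` equals the convex hull of its
(finitely many) extreme points, i.e. it is a V-polytope generated by its vertices. -/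
theorem hPolytope_eq_convexHull_vertices (m k : ℕ)
    (A : Matrix (Fin m) (Fin k) ℝ) (b : Fin m → ℝ)
    (P : Set (Fin k → ℝ)) (hP : P = {x : Fin k → ℝ | ∀ i, A.mulVec x i ≤ b i})
    (hbdd : Bornology.IsBounded P) :
    (P.extremePoints ℝ).Finite ∧ P = convexHull ℝ (P.extremePoints ℝ) := by
  -- finiteness via injective tight-set map
  have hfin : (P.extremePoints ℝ).Finite := by
    set g : (Fin k → ℝ) → Set (Fin m) := fun x => {i | A.mulVec x i = b i} with hg
    have hinj : Set.InjOn g (P.extremePoints ℝ) := by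
      intro x hx y hy hxy
      have hd : ∀ i, A.mulVec x i = b i → A.mulVec (y - x) i = 0 := by
        intro i hi
        have hyi : A.mulVec y i = b i := by
          have : i ∈ g x := hi
          rw [hxy] at this; exact this
        rw [Matrix.mulVec_sub, Pi.sub_apply, hyi, hi, sub_self]
      have := tight_ker_eq_zero m k A b P hP x hx (y - x) hd
      have : y - x = 0 := this
      linear_combination (norm := abel) -this
    exact Set.Finite.of_finite_image (Set.toFinite _) hinj
  refine ⟨hfin, ?_⟩
  have hconv : Convex ℝ P := by
    rw [hP]
    have : {x : Fin k → ℝ | ∀ i, A.mulVec x i ≤ b i} =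
        ⋂ i, {x : Fin k → ℝ | A.mulVec x i ≤ b i} := by ext x; simp
    rw [this]
    refine convex_iInter fun i => ?_
    exact convex_halfSpace_le
      (((LinearMap.proj i).comp (Matrix.mulVecLin A)).isLinear) (b i)
  have hclosed : IsClosed P := by
    rw [hP]
    have : {x : Fin k → ℝ | ∀ i, A.mulVec x i ≤ b i} =
        ⋂ i, {x : Fin k → ℝ | A.mulVec x i ≤ b i} := by ext x; simp
    rw [this]
    refine isClosed_iInter fun i => ?_
    exact isClosed_le (by continuity) continuous_const
  have hcomp : IsCompact P := Metric.isCompact_of_isClosed_isBounded hclosed hbdd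
  have hKM := closure_convexHull_extremePoints hcomp hconv
  have hch : IsClosed (convexHull ℝ (P.extremePoints ℝ)) := (hfin.isCompact_convexHull (𝕜 := ℝ)).isClosed
  rw [hch.closure_eq] at hKM
  exact hKM.symm
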